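/- Let w be a fixed-point-free involution on {1,...,2n}, let u ⪯ w with u ≠ w₀, and let r = (i,j) with i < j be a transposition such that u ⋆ r ⪯ u and u ⋆ r ≠ u. Set a = u(i), b = u(j) (so a < b). Then for every transposition t with support disjoint from {a,b,i,j} such that u ⋆ t ≠ u and u ⋆ t ⪯ w, at least one of u ⋆ (t r) ⪯ w or u ⋆ (r t) ⪯ w holds. -/
import Mathlib


open Equiv

/-- A fixed-point-free involution of `Fin m`. -/
def IsFpfInvolution {m : ℕ} (u : Equiv.Perm (Fin m)) : Prop :=
  u * u = 1 ∧ ∀ i, u i ≠ i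

/-- The number of inversions of a permutation (its Coxeter length). -/
def invCount {m : ℕ} (u : Equiv.Perm (Fin m)) : ℕ :=
  (Finset.univ.filter (fun p : Fin m × Fin m => p.1 < p.2 ∧ u p.2 < u p.1)).card

/-- One step in the Bruhat order: right multiplication by a transposition
which increases the length. -/
def BruhatStep {m : ℕ} (x y : Equiv.Perm (Fin m)) : Prop :=
  (∃ a b : Fin m, a ≠ b ∧ y = x * Equiv.swap a b) ∧ invCount x < invCount y

/-- The Bruhat order on the symmetric group. -/
def BruhatLE {m : ℕ} (x y : Equiv.Perm (Fin m)) : Prop :=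
  Relation.ReflTransGen BruhatStep x y

/-- The dual of the Bruhat order (restricted to fixed-point-free involutions,
this is the order `⪯` with minimum element `w₀`). -/
def DualLE {m : ℕ} (x y : Equiv.Perm (Fin m)) : Prop := BruhatLE y x

/-- Strict version of `DualLE`. -/
def DualLT {m : ℕ} (x y : Equiv.Perm (Fin m)) : Prop := BruhatLE y x ∧ x ≠ y

lemma invCount_lt_mul_swap {m : ℕ} (g : Equiv.Perm (Fin m)) {p q : Fin m}
    (hpq : p < q) (hg : g p < g q) :
    invCount g < invCount (g * Equiv.swap p q) := by
  classical
  set σ := Equiv.swap p q with hσ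
  set A := Finset.univ.filter (fun e : Fin m × Fin m => e.1 < e.2 ∧ g e.2 < g e.1) with hA
  set B := Finset.univ.filter
      (fun e : Fin m × Fin m => e.1 < e.2 ∧ g (σ e.2) < g (σ e.1)) with hB
  have hBcount : invCount (g * σ) = B.card := by
    unfold invCount
    congr 1
  set P : Fin m × Fin m → Prop := fun e => σ e.2 < σ e.1 with hP
  have hsplitA : (A.filter P).card + (A.filter (fun e => ¬ P e)).card = A.card :=
    Finset.card_filter_add_card_filter_not _
  have hsplitB : (B.filter P).card + (B.filter (fun e => ¬ P e)).card = B.card :=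
    Finset.card_filter_add_card_filter_not _
  have hbij : (B.filter (fun e => ¬ P e)).card = (A.filter (fun e => ¬ P e)).card := by
    apply Finset.card_bij' (fun e _ => (σ e.1, σ e.2)) (fun e _ => (σ e.1, σ e.2))
    · intro e he
      simp only [Finset.mem_filter, Finset.mem_univ, true_and, hB, hA, hP] at he ⊢
      obtain ⟨⟨h1, h2⟩, h3⟩ := he
      have hne : σ e.1 ≠ σ e.2 := fun h => (ne_of_lt h1) (σ.injective h)
      have hlt : σ e.1 < σ e.2 := lt_of_le_of_ne (not_lt.mp h3) hne
      refine ⟨⟨hlt, h2⟩, ?_⟩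
      simp only [Equiv.swap_apply_self, hσ]
      exact not_lt.mpr (le_of_lt h1)
    · intro e he
      simp only [Finset.mem_filter, Finset.mem_univ, true_and, hB, hA, hP] at he ⊢
      obtain ⟨⟨h1, h2⟩, h3⟩ := he
      have hne : σ e.1 ≠ σ e.2 := fun h => (ne_of_lt h1) (σ.injective h)
      have hlt : σ e.1 < σ e.2 := lt_of_le_of_ne (not_lt.mp h3) hne
      refine ⟨⟨hlt, ?_⟩, ?_⟩
      · simpa only [Equiv.swap_apply_self, hσ] using h2
      · simp only [Equiv.swap_apply_self, hσ]
        exact not_lt.mpr (le_of_lt h1)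
    · intro e he; simp [hσ, Equiv.swap_apply_self]
    · intro e he; simp [hσ, Equiv.swap_apply_self]
  have hsub : A.filter P ⊆ B.filter P := by
    intro e he
    simp only [Finset.mem_filter, Finset.mem_univ, true_and, hA, hB, hP] at he ⊢
    obtain ⟨⟨h1, h2⟩, h3⟩ := he
    refine ⟨⟨h1, ?_⟩, h3⟩
    rcases eq_or_ne e.1 p with h1p | h1p
    · rcases eq_or_ne e.2 q with h2q | h2q
      · rw [h1p, h2q, Equiv.swap_apply_left, Equiv.swap_apply_right]
        exact hg
      · have h2p : e.2 ≠ p := fun h => absurd (h1p ▸ h ▸ h1) (lt_irrefl _)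
        rw [h1p, Equiv.swap_apply_left, Equiv.swap_apply_of_ne_of_ne h2p h2q]
        exact lt_trans (h1p ▸ h2) hg
    · rcases eq_or_ne e.2 q with h2q | h2q
      · have h1q : e.1 ≠ q := fun h => absurd (h2q ▸ h ▸ h1) (lt_irrefl _)
        rw [h2q, Equiv.swap_apply_right, Equiv.swap_apply_of_ne_of_ne h1p h1q]
        exact lt_trans hg (h2q ▸ h2)
      · exfalso
        rcases eq_or_ne e.1 q with h1q | h1q
        · rcases eq_or_ne e.2 p with h2p | h2p
          · exact absurd (h2p ▸ h1q ▸ h1) (not_lt.mpr (le_of_lt hpq))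
          · rw [h1q, Equiv.swap_apply_right, Equiv.swap_apply_of_ne_of_ne h2p h2q] at h3
            exact absurd h3 (not_lt.mpr (le_of_lt (lt_trans hpq (h1q ▸ h1))))
        · rcases eq_or_ne e.2 p with h2p | h2p
          · rw [h2p, Equiv.swap_apply_left, Equiv.swap_apply_of_ne_of_ne h1p h1q] at h3
            exact absurd h3 (not_lt.mpr (le_of_lt (lt_trans (h2p ▸ h1) hpq)))
          · rw [Equiv.swap_apply_of_ne_of_ne h1p h1q,
              Equiv.swap_apply_of_ne_of_ne h2p h2q] at h3
            exact absurd h1 (not_lt.mpr (le_of_lt h3))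
  have hmem : (p, q) ∈ B.filter P ∧ (p, q) ∉ A.filter P := by
    constructor
    · simp only [Finset.mem_filter, Finset.mem_univ, true_and, hB, hP]
      refine ⟨⟨hpq, ?_⟩, ?_⟩
      · rw [Equiv.swap_apply_left, Equiv.swap_apply_right]; exact hg
      · rw [Equiv.swap_apply_left, Equiv.swap_apply_right]; exact hpq
    · simp only [Finset.mem_filter, Finset.mem_univ, true_and, hA, hP, not_and]
      intro h
      exact absurd h.2 (not_lt.mpr (le_of_lt hg))
  have hstrict : (A.filter P).card < (B.filter P).card :=
    Finset.card_lt_card ⟨hsub, fun h => hmem.2 (h hmem.1)⟩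
  have hAcount : invCount g = A.card := rfl
  omega

lemma invCount_le_of_bruhatLE {m : ℕ} {x y : Equiv.Perm (Fin m)} (h : BruhatLE x y) :
    invCount x ≤ invCount y := by
  induction h with
  | refl => exact le_refl _
  | tail h₁ h₂ ih => exact ih.trans (le_of_lt h₂.2)

/-- If `g` exchanges `i ↔ a` and `j ↔ b` with `{a,b} ∩ {i,j} = ∅`, then
conjugating by `swap i j` equals right-multiplying by `swap a b * swap i j`. -/
lemma conj_swap_eq {m : ℕ} (g : Equiv.Perm (Fin m)) {i j a b : Fin m}
    (hgi : g i = a) (hgj : g j = b) (hga : g a = i) (hgb : g b = j)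
    (hai : a ≠ i) (haj : a ≠ j) (hbi : b ≠ i) (hbj : b ≠ j) :
    (Equiv.swap i j)⁻¹ * g * (Equiv.swap i j) = g * Equiv.swap a b * Equiv.swap i j := by
  have key : Equiv.swap i j * g = g * Equiv.swap a b := by
    ext x
    simp only [Equiv.Perm.mul_apply]
    rcases eq_or_ne x a with rfl | hxa
    · rw [Equiv.swap_apply_left, hga, hgb]
      exact congrArg Fin.val (Equiv.swap_apply_left i j)
    · rcases eq_or_ne x b with rfl | hxb
      · rw [Equiv.swap_apply_right, hgb, hga]
        exact congrArg Fin.val (Equiv.swap_apply_right i j)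
      · rw [Equiv.swap_apply_of_ne_of_ne hxa hxb]
        have h1 : g x ≠ i := fun h => hxa (g.injective (h.trans hga.symm))
        have h2 : g x ≠ j := fun h => hxb (g.injective (h.trans hgb.symm))
        exact congrArg Fin.val (Equiv.swap_apply_of_ne_of_ne h1 h2)
  rw [Equiv.swap_inv]
  rw [key]


/-- let `u ⪯ w` with `u ≠ w₀` and `r = (i,j)`, `i < j`, a
transposition with `u ⋆ r ≺ u`; set `a = u i`, `b = u j`. Then for every
transposition `t` with support disjoint from `{a, b, i, j}` such that
`u ⋆ t ≠ u` and `u ⋆ t ⪯ w`, at least one of `u ⋆ (t r) ⪯ w` or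
`u ⋆ (r t) ⪯ w` holds. -/
theorem disjoint_support_case {n : ℕ} (u w : Equiv.Perm (Fin (2 * n)))
    (hu : IsFpfInvolution u) (hw : IsFpfInvolution w)
    (huw : DualLE u w) (hu0 : u ≠ Fin.revPerm)
    (i j : Fin (2 * n)) (hij : i < j)
    (hdown : DualLT ((Equiv.swap i j)⁻¹ * u * Equiv.swap i j) u)
    (c d : Fin (2 * n)) (hcd : c ≠ d)
    (hdisj : ({c, d} : Set (Fin (2 * n))) ∩ {u i, u j, i, j} = ∅)
    (hne : (Equiv.swap c d)⁻¹ * u * Equiv.swap c d ≠ u)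
    (htw : DualLE ((Equiv.swap c d)⁻¹ * u * Equiv.swap c d) w) :
    DualLE ((Equiv.swap c d * Equiv.swap i j)⁻¹ * u *
        (Equiv.swap c d * Equiv.swap i j)) w ∨
      DualLE ((Equiv.swap i j * Equiv.swap c d)⁻¹ * u *
        (Equiv.swap i j * Equiv.swap c d)) w := by
  classical
  obtain ⟨huinv, hufpf⟩ := hu
  have huu : ∀ x, u (u x) = x := fun x => by
    have := congr_arg (fun p : Equiv.Perm (Fin (2 * n)) => p x) huinv
    simpa using this
  -- disjointness facts
  have hcmem : c ∉ ({u i, u j, i, j} : Set (Fin (2 * n))) := by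
    intro h
    have : c ∈ ({c, d} : Set (Fin (2 * n))) ∩ {u i, u j, i, j} := ⟨by simp, h⟩
    rw [hdisj] at this
    exact this
  have hdmem : d ∉ ({u i, u j, i, j} : Set (Fin (2 * n))) := by
    intro h
    have : d ∈ ({c, d} : Set (Fin (2 * n))) ∩ {u i, u j, i, j} := ⟨by simp, h⟩
    rw [hdisj] at this
    exact this
  simp only [Set.mem_insert_iff, Set.mem_singleton_iff, not_or] at hcmem hdmem
  obtain ⟨hca, hcb, hci, hcj⟩ := hcmem
  obtain ⟨hda, hdb, hdi, hdj⟩ := hdmem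
  -- u i ≠ j
  have huij : u i ≠ j := by
    intro h
    apply hdown.2
    have huji : u j = i := by rw [← h, huu]
    ext x
    simp only [Equiv.Perm.mul_apply, Equiv.swap_inv]
    rcases eq_or_ne x i with rfl | hxi
    · rw [Equiv.swap_apply_left, huji, Equiv.swap_apply_left, h]
    · rcases eq_or_ne x j with rfl | hxj
      · rw [Equiv.swap_apply_right, h, Equiv.swap_apply_right, huji]
      · rw [Equiv.swap_apply_of_ne_of_ne hxi hxj]
        have h1 : u x ≠ i := fun h' => hxj (u.injective (h'.trans huji.symm))
        have h2 : u x ≠ j := fun h' => hxi (u.injective (h'.trans h.symm))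
        exact congrArg Fin.val (Equiv.swap_apply_of_ne_of_ne h1 h2)
  have huji : u j ≠ i := fun h => huij (by rw [← h, huu])
  have hai : u i ≠ i := hufpf i
  have hbj : u j ≠ j := hufpf j
  have hab : u i ≠ u j := fun h => (ne_of_lt hij) (u.injective h)
  have hua : u (u i) = i := huu i
  have hub : u (u j) = j := huu j
  -- from hdown, conclude u i < u j
  have hrur : (Equiv.swap i j)⁻¹ * u * Equiv.swap i j
      = u * Equiv.swap (u i) (u j) * Equiv.swap i j :=
    conj_swap_eq u rfl rfl hua hub hai huij huji hbj
  have haltb : u i < u j := by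
    rcases lt_or_gt_of_ne hab with h | h
    · exact h
    -- u j < u i : derive a contradiction with hdown
    exfalso
    have h1 : invCount (u * Equiv.swap (u i) (u j)) < invCount u := by
      have hval : (u * Equiv.swap (u i) (u j)) (u j) < (u * Equiv.swap (u i) (u j)) (u i) := by
        simp only [Equiv.Perm.mul_apply, Equiv.swap_apply_left, Equiv.swap_apply_right,
          hua, hub]
        exact hij
      have := invCount_lt_mul_swap (u * Equiv.swap (u i) (u j)) h hval
      rwa [mul_assoc, Equiv.swap_comm (u j) (u i), Equiv.swap_mul_self, mul_one] at this
    have h2 : invCount (u * Equiv.swap (u i) (u j) * Equiv.swap i j)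
        < invCount (u * Equiv.swap (u i) (u j)) := by
      have hval : (u * Equiv.swap (u i) (u j) * Equiv.swap i j) i
          < (u * Equiv.swap (u i) (u j) * Equiv.swap i j) j := by
        simp only [Equiv.Perm.mul_apply, Equiv.swap_apply_left, Equiv.swap_apply_right]
        rw [Equiv.swap_apply_of_ne_of_ne (Ne.symm huij) (Ne.symm hbj),
          Equiv.swap_apply_of_ne_of_ne (Ne.symm hai) (Ne.symm huji)]
        exact h
      have := invCount_lt_mul_swap (u * Equiv.swap (u i) (u j) * Equiv.swap i j) hij hval
      rwa [mul_assoc (u * Equiv.swap (u i) (u j)), Equiv.swap_mul_self, mul_one] at this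
    have h3 : invCount u ≤ invCount ((Equiv.swap i j)⁻¹ * u * Equiv.swap i j) :=
      invCount_le_of_bruhatLE hdown.1
    rw [hrur] at h3
    omega
  -- now work with v = t⁻¹ u t
  set v := (Equiv.swap c d)⁻¹ * u * Equiv.swap c d with hv
  have hvapp : ∀ x, v x = Equiv.swap c d (u (Equiv.swap c d x)) := fun x => by
    simp [hv, Equiv.Perm.mul_apply, Equiv.swap_inv]
  have hvi : v i = u i := by
    rw [hvapp, Equiv.swap_apply_of_ne_of_ne (Ne.symm hci) (Ne.symm hdi),
      Equiv.swap_apply_of_ne_of_ne (Ne.symm hca) (Ne.symm hda)]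
  have hvj : v j = u j := by
    rw [hvapp, Equiv.swap_apply_of_ne_of_ne (Ne.symm hcj) (Ne.symm hdj),
      Equiv.swap_apply_of_ne_of_ne (Ne.symm hcb) (Ne.symm hdb)]
  have hva : v (u i) = i := by
    rw [hvapp, Equiv.swap_apply_of_ne_of_ne (Ne.symm hca) (Ne.symm hda), hua,
      Equiv.swap_apply_of_ne_of_ne (Ne.symm hci) (Ne.symm hdi)]
  have hvb : v (u j) = j := by
    rw [hvapp, Equiv.swap_apply_of_ne_of_ne (Ne.symm hcb) (Ne.symm hdb), hub,
      Equiv.swap_apply_of_ne_of_ne (Ne.symm hcj) (Ne.symm hdj)]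
  have hrvr : (Equiv.swap i j)⁻¹ * v * Equiv.swap i j
      = v * Equiv.swap (u i) (u j) * Equiv.swap i j :=
    conj_swap_eq v hvi hvj hva hvb hai huij huji hbj
  -- two increasing steps above v
  have step1 : BruhatStep v (v * Equiv.swap (u i) (u j)) := by
    refine ⟨⟨u i, u j, hab, rfl⟩, ?_⟩
    apply invCount_lt_mul_swap v haltb
    rw [hva, hvb]
    exact hij
  have step2 : BruhatStep (v * Equiv.swap (u i) (u j))
      (v * Equiv.swap (u i) (u j) * Equiv.swap i j) := by
    refine ⟨⟨i, j, ne_of_lt hij, rfl⟩, ?_⟩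
    apply invCount_lt_mul_swap _ hij
    simp only [Equiv.Perm.mul_apply]
    rw [Equiv.swap_apply_of_ne_of_ne (Ne.symm hai) (Ne.symm huji),
      Equiv.swap_apply_of_ne_of_ne (Ne.symm huij) (Ne.symm hbj), hvi, hvj]
    exact haltb
  have chain : BruhatLE w (v * Equiv.swap (u i) (u j) * Equiv.swap i j) :=
    (htw.tail step1).tail step2
  left
  show BruhatLE w _
  have heq : (Equiv.swap c d * Equiv.swap i j)⁻¹ * u * (Equiv.swap c d * Equiv.swap i j)
      = (Equiv.swap i j)⁻¹ * v * Equiv.swap i j := by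
    rw [hv]
    group
  rw [heq, hrvr]
  exact chain
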